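/- Let μ be a reasonable probability measure on F_r. Then there exist a constant C > 0 and a natural number a (depending only on μ) such that for every n ∈ ℕ, every h ∈ F_r, and every h' ∈ F_r lying on the geodesic segment from the identity to h (i.e. ‖h‖ = ‖h'‖ + ‖h'⁻¹·h‖), one has (μ^n) h ≤ C · Σ_{k=0}^{n+a} (μ^k) h' · (μ^{n+a−k}) (h'⁻¹·h). -/

import Mathlib

/-- `μ` is a reasonable probability measure on the free group: symmetric, finitely
supported (automatic in the monoid algebra), with nonnegative values summing to `1`,
charging the identity, and with support generating the group. -/
def Reasonable {r : ℕ} (μ : MonoidAlgebra ℝ (FreeGroup (Fin r))) : Prop :=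
  (∀ g : FreeGroup (Fin r), 0 ≤ μ.coeff g) ∧
  (∑ g ∈ μ.coeff.support, μ.coeff g = 1) ∧
  (∀ g : FreeGroup (Fin r), μ.coeff g = μ.coeff g⁻¹) ∧
  0 < μ.coeff (1 : FreeGroup (Fin r)) ∧
  Subgroup.closure (↑μ.coeff.support : Set (FreeGroup (Fin r))) = ⊤

open List

namespace RWalk

/-- Non-cancelling adjacency relation on letters. -/
def NC {α : Type*} (a b : α × Bool) : Prop := ¬(a.1 = b.1 ∧ a.2 = !b.2)

variable {α : Type*} [DecidableEq α]

open FreeGroup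

lemma invRev_append (L1 L2 : List (α × Bool)) :
    invRev (L1 ++ L2) = invRev L2 ++ invRev L1 := by
  simp [invRev, List.reverse_append]

lemma not_chain'_decomp {β : Type*} {R : β → β → Prop} :
    ∀ (L : List β), ¬ List.IsChain R L → ∃ l₁ a b l₂, L = l₁ ++ a :: b :: l₂ ∧ ¬ R a b
  | [], h => absurd List.isChain_nil h
  | [x], h => absurd (List.isChain_singleton x) h
  | x :: y :: t, h => by
    by_cases hxy : R x y
    · have : ¬ List.IsChain R (y :: t) := fun hc => h (List.isChain_cons_cons.2 ⟨hxy, hc⟩)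
      obtain ⟨l₁, a, b, l₂, heq, hR⟩ := not_chain'_decomp (y :: t) this
      exact ⟨x :: l₁, a, b, l₂, by rw [heq]; rfl, hR⟩
    · exact ⟨[], x, y, t, rfl, hxy⟩

lemma chain'_of_reduced {L : List (α × Bool)} (h : reduce L = L) : List.IsChain NC L := by
  by_contra hc
  obtain ⟨l₁, a, b, l₂, heq, hR⟩ := not_chain'_decomp L hc
  simp only [NC, not_not] at hR
  obtain ⟨h1, h2⟩ := hR
  have hb : b = (a.1, !a.2) := by
    ext
    · exact h1.symm
    · simp [h2]
  rw [heq, hb] at h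
  exact FreeGroup.reduce.not (L₂ := l₁) (L₃ := l₂) (x := a.1) (b := a.2) (by rw [h])

lemma reduced_of_chain' : ∀ {L : List (α × Bool)}, List.IsChain NC L → reduce L = L
  | [], _ => rfl
  | [x], _ => rfl
  | x :: y :: t, h => by
    have h1 : NC x y := (List.isChain_cons_cons.1 h).1
    have h2 : reduce (y :: t) = y :: t := reduced_of_chain' (List.isChain_cons_cons.1 h).2
    rw [reduce.cons, h2]
    exact if_neg (by simpa [NC] using h1)

lemma lcp_exists {β : Type*} :
    ∀ (p q : List β), ∃ u v w, p = u ++ v ∧ q = u ++ w ∧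
      ∀ a t b s, v = a :: t → w = b :: s → a ≠ b
  | [], q => ⟨[], [], q, rfl, rfl, by intro _ _ _ _ h; simp at h⟩
  | p, [] => ⟨[], p, [], by simp, rfl, by intro _ _ _ _ _ h; simp at h⟩
  | x :: p, y :: q => by
    by_cases hxy : x = y
    · obtain ⟨u, v, w, hp, hq, hne⟩ := lcp_exists p q
      exact ⟨x :: u, v, w, by rw [hp]; rfl, by rw [hxy, hq]; rfl, hne⟩
    · exact ⟨[], x :: p, y :: q, rfl, rfl, by
        rintro a t b s h1 h2
        injection h1 with h1' _
        injection h2 with h2' _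
        rw [← h1', ← h2']; exact hxy⟩

/-- The main cancellation decomposition for `x⁻¹ * y` in the free group. -/
lemma key_decomp (x y : FreeGroup α) :
    ∃ u v w : List (α × Bool), x.toWord = u ++ v ∧ y.toWord = u ++ w ∧
      (x⁻¹ * y).toWord = invRev v ++ w ∧
      ∀ a t b s, v = a :: t → w = b :: s → a ≠ b := by
  obtain ⟨u, v, w, hx, hy, hne⟩ := lcp_exists x.toWord y.toWord
  refine ⟨u, v, w, hx, hy, ?_, hne⟩
  have hxm : x = mk u * mk v := by
    rw [mul_mk, ← hx, mk_toWord]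
  have hym : y = mk u * mk w := by
    rw [mul_mk, ← hy, mk_toWord]
  have hmul : x⁻¹ * y = mk (invRev v ++ w) := by
    rw [hxm, hym, ← mul_mk, ← inv_mk]
    group
  -- chain' facts
  have hcx : List.IsChain NC (u ++ v) := by
    rw [← hx]; exact chain'_of_reduced x.reduce_toWord
  have hcy : List.IsChain NC (u ++ w) := by
    rw [← hy]; exact chain'_of_reduced y.reduce_toWord
  have hcv : List.IsChain NC v := (List.isChain_append.1 hcx).2.1
  have hcw : List.IsChain NC w := (List.isChain_append.1 hcy).2.1
  have hcvi : List.IsChain NC (invRev v) := by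
    rw [invRev, List.isChain_reverse, List.isChain_map]
    refine List.IsChain.imp ?_ hcv
    intro a b hab
    simp only [NC, Function.flip_def, not_and] at hab ⊢
    intro h1 h2
    exact hab h1.symm (by simp at h2; simp [h2])
  have hjunc : ∀ p ∈ (invRev v).getLast?, ∀ q ∈ w.head?, NC p q := by
    intro p hp q hq
    match v, w with
    | [], _ => simp [invRev] at hp
    | _, [] => simp at hq
    | a :: t, b :: s =>
      have hne' : a ≠ b := hne a t b s rfl rfl
      have hiv : invRev (a :: t) = invRev t ++ [(a.1, !a.2)] := by
        simp [invRev]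
      rw [hiv, List.getLast?_append] at hp
      have hp' : (a.1, !a.2) = p := by simpa using hp
      have hq' : b = q := by simpa using hq
      rw [← hp', ← hq']
      simp only [NC, not_and]
      intro h1 h2
      exact hne' (Prod.ext h1 (Bool.not_inj h2))
  have hred : reduce (invRev v ++ w) = invRev v ++ w :=
    reduced_of_chain' (List.isChain_append.2 ⟨hcvi, hcw, hjunc⟩)
  rw [hmul, toWord_mk, hred]

lemma norm_toWord {x : FreeGroup α} : norm x = x.toWord.length := rfl

/-- geodesic prefix characterization -/
lemma prefix_iff (h' x : FreeGroup α) :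
    norm x = norm h' + norm (h'⁻¹ * x) ↔ h'.toWord <+: x.toWord := by
  obtain ⟨u, v, w, hh, hx, hlen, hne⟩ := key_decomp h' x
  constructor
  · intro heq
    have h1 : norm x = u.length + w.length := by rw [norm_toWord, hx, List.length_append]
    have h2 : norm h' = u.length + v.length := by rw [norm_toWord, hh, List.length_append]
    have h3 : norm (h'⁻¹ * x) = v.length + w.length := by
      rw [norm_toWord, hlen, List.length_append, invRev_length]
    have hv : v.length = 0 := by omega
    have : v = [] := List.length_eq_zero_iff.1 hv
    rw [hh, this, List.append_nil, hx]
    exact ⟨w, rfl⟩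
  · intro hpre
    match v, hh, hlen, hne with
    | [], hh, hlen, hne =>
      have h1 : norm x = u.length + w.length := by rw [norm_toWord, hx, List.length_append]
      have h2 : norm h' = u.length := by rw [norm_toWord, hh, List.append_nil]
      have h3 : norm (h'⁻¹ * x) = w.length := by
        rw [norm_toWord, hlen, invRev_empty, List.nil_append]
      omega
    | a :: t, hh, hlen, hne =>
      exfalso
      rw [hh, hx] at hpre
      have hpre' : a :: t <+: w := (List.prefix_append_right_inj u).1 hpre
      obtain ⟨s', hs'⟩ := hpre'
      exact hne a t a (t ++ s') rfl (by rw [← hs']; rfl) rfl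

/-- The crossing lemma: if `h'` is a (geodesic) prefix of `y` but not of `x`, then
`h'` is at distance at most `d(x,y)` from `y`. -/
lemma crossing (h' x y : FreeGroup α) (hy : h'.toWord <+: y.toWord)
    (hx : ¬ h'.toWord <+: x.toWord) : norm (h'⁻¹ * y) ≤ norm (x⁻¹ * y) := by
  obtain ⟨u, v, w, hxw, hyw, hlen, hne⟩ := key_decomp x y
  have h3 : norm (x⁻¹ * y) = v.length + w.length := by
    rw [norm_toWord, hlen, List.length_append, invRev_length]
  have hgeo : norm y = norm h' + norm (h'⁻¹ * y) := (prefix_iff h' y).2 hy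
  have h1 : norm y = u.length + w.length := by rw [norm_toWord, hyw, List.length_append]
  have hlong : u.length < norm h' := by
    by_contra hle
    push_neg at hle
    have hu : u <+: y.toWord := by rw [hyw]; exact ⟨w, rfl⟩
    have := List.prefix_of_prefix_length_le hy hu (by rwa [norm_toWord] at hle)
    exact hx (this.trans (by rw [hxw]; exact ⟨v, rfl⟩))
  omega

end RWalk

namespace RWalk

variable {G : Type*} [Group G] [DecidableEq G]

lemma mul_apply_left (f p : MonoidAlgebra ℝ G) (w : G) :
    (f * p).coeff w = ∑ a ∈ f.coeff.support, f.coeff a * p.coeff (a⁻¹ * w) := by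
  rw [MonoidAlgebra.coeff_mul, Finsupp.sum]
  refine Finset.sum_congr rfl fun a _ => ?_
  rw [Finsupp.sum]
  have : ∀ b ∈ p.coeff.support, (if a * b = w then f.coeff a * p.coeff b else 0)
      = if b = a⁻¹ * w then f.coeff a * p.coeff b else 0 := by
    intro b _
    congr 1
    simp only [eq_iff_iff]
    constructor
    · intro h; rw [← h]; group
    · intro h; rw [h]; group
  rw [Finset.sum_congr rfl this, Finset.sum_ite_eq' p.coeff.support (a⁻¹ * w) (fun b => f.coeff a * p.coeff b)]
  split_ifs with hmem
  · rfl
  · rw [Finsupp.notMem_support_iff.1 hmem, mul_zero]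

lemma mul_apply_right (p f : MonoidAlgebra ℝ G) (w : G) :
    (p * f).coeff w = ∑ a ∈ f.coeff.support, p.coeff (w * a⁻¹) * f.coeff a := by
  simp only [MonoidAlgebra.coeff_mul, Finsupp.sum]
  rw [Finset.sum_comm]
  refine Finset.sum_congr rfl fun a _ => ?_
  have : ∀ b ∈ p.coeff.support, (if b * a = w then p.coeff b * f.coeff a else 0)
      = if b = w * a⁻¹ then p.coeff b * f.coeff a else 0 := by
    intro b _
    congr 1
    simp only [eq_iff_iff]
    constructor
    · intro h; rw [← h]; group
    · intro h; rw [h]; group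
  rw [Finset.sum_congr rfl this, Finset.sum_ite_eq' p.coeff.support (w * a⁻¹) (fun b => p.coeff b * f.coeff a)]
  split_ifs with hmem
  · rfl
  · rw [Finsupp.notMem_support_iff.1 hmem, zero_mul]

variable {μ : MonoidAlgebra ℝ G}

lemma pow_nonneg' (hnn : ∀ g : G, 0 ≤ μ.coeff g) : ∀ (n : ℕ) (g : G), 0 ≤ (μ ^ n).coeff g := by
  intro n
  induction n with
  | zero =>
    intro g
    rw [pow_zero, MonoidAlgebra.one_def]
    rw [MonoidAlgebra.coeff_single, Finsupp.single_apply]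
    split_ifs <;> norm_num
  | succ n ih =>
    intro g
    rw [pow_succ', mul_apply_left]
    exact Finset.sum_nonneg fun a _ => mul_nonneg (hnn a) (ih _)

lemma le_pow_add (hnn : ∀ g : G, 0 ≤ μ.coeff g) (m n : ℕ) (g w : G) :
    (μ ^ m).coeff g * (μ ^ n).coeff (g⁻¹ * w) ≤ (μ ^ (m + n)).coeff w := by
  rw [pow_add, mul_apply_left]
  by_cases hg : g ∈ (μ ^ m).coeff.support
  · exact Finset.single_le_sum
      (f := fun a => (μ ^ m).coeff a * (μ ^ n).coeff (a⁻¹ * w))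
      (fun a _ => mul_nonneg (pow_nonneg' hnn m a) (pow_nonneg' hnn n _)) hg
  · rw [Finsupp.notMem_support_iff.1 hg, zero_mul]
    exact Finset.sum_nonneg fun a _ => mul_nonneg (pow_nonneg' hnn m a) (pow_nonneg' hnn n _)

lemma pow_symm (hsym : ∀ g : G, μ.coeff g = μ.coeff g⁻¹) : ∀ (n : ℕ) (g : G), (μ ^ n).coeff g = (μ ^ n).coeff g⁻¹ := by
  intro n
  induction n with
  | zero =>
    intro g
    rw [pow_zero, MonoidAlgebra.one_def, MonoidAlgebra.coeff_single, Finsupp.single_apply, Finsupp.single_apply]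
    by_cases hg : g = 1
    · subst hg; simp
    · rw [if_neg (fun h => hg h.symm), if_neg (fun h => hg (by rw [← inv_inv g, ← h, inv_one]))]
  | succ n ih =>
    intro g
    have key : ∑ a ∈ μ.coeff.support, (μ ^ n).coeff (g * a⁻¹) * μ.coeff a
        = ∑ a ∈ μ.coeff.support, μ.coeff a * (μ ^ n).coeff (a⁻¹ * g⁻¹) := by
      refine Finset.sum_equiv (Equiv.inv G) ?_ ?_
      · intro a
        simp only [Finsupp.mem_support_iff, Equiv.inv_apply]
        rw [hsym a]
      · intro a _
        rw [Equiv.inv_apply, inv_inv, ← hsym a, ih (g * a⁻¹)]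
        rw [mul_comm (μ.coeff a)]
        congr 2
        group
    calc (μ ^ (n + 1)).coeff g = ∑ a ∈ μ.coeff.support, (μ ^ n).coeff (g * a⁻¹) * μ.coeff a := by
          rw [pow_succ, mul_apply_right]
      _ = ∑ a ∈ μ.coeff.support, μ.coeff a * (μ ^ n).coeff (a⁻¹ * g⁻¹) := key
      _ = (μ ^ (n + 1)).coeff g⁻¹ := by rw [pow_succ', mul_apply_left]

lemma pow_one_pos (hnn : ∀ g : G, 0 ≤ μ.coeff g) (h1 : 0 < μ.coeff 1) :
    ∀ n : ℕ, 0 < (μ ^ n).coeff (1 : G) := by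
  intro n
  induction n with
  | zero => rw [pow_zero, MonoidAlgebra.one_def]; simp
  | succ n ih =>
    have := le_pow_add hnn n 1 (1 : G) 1
    rw [pow_one] at this
    simp only [inv_one, one_mul] at this
    exact lt_of_lt_of_le (mul_pos ih h1) this

lemma exists_pow_pos (hnn : ∀ g : G, 0 ≤ μ.coeff g) (h1 : 0 < μ.coeff 1)
    (hsym : ∀ g : G, μ.coeff g = μ.coeff g⁻¹)
    (hgen : Subgroup.closure (↑μ.coeff.support : Set G) = ⊤) (g : G) :
    ∃ m : ℕ, ∀ k : ℕ, 0 < (μ ^ (m + k)).coeff g := by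
  -- the set of elements reachable with positive probability is a subgroup
  let S : Subgroup G :=
    { carrier := {g : G | ∃ m : ℕ, 0 < (μ ^ m).coeff g}
      one_mem' := ⟨0, by rw [pow_zero, MonoidAlgebra.one_def]; simp⟩
      mul_mem' := by
        rintro x y ⟨m, hm⟩ ⟨m', hm'⟩
        refine ⟨m + m', lt_of_lt_of_le ?_ (le_pow_add hnn m m' x (x * y))⟩
        rw [inv_mul_cancel_left]
        exact mul_pos hm hm'
      inv_mem' := by
        rintro x ⟨m, hm⟩
        exact ⟨m, by rwa [← pow_symm hsym m x]⟩ }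
  have hsub : (↑μ.coeff.support : Set G) ⊆ S := by
    intro s hs
    refine ⟨1, ?_⟩
    rw [pow_one]
    rcases (hnn s).lt_or_eq with h | h
    · exact h
    · exact absurd h.symm (Finsupp.mem_support_iff.1 hs)
  have hS : ∀ x : G, x ∈ S := by
    intro x
    have : (⊤ : Subgroup G) ≤ S := by rw [← hgen]; exact Subgroup.closure_le S |>.2 hsub
    exact this trivial
  obtain ⟨m, hm⟩ := hS g
  refine ⟨m, fun k => ?_⟩
  have := le_pow_add hnn k m (1 : G) g
  simp only [inv_one, one_mul] at this
  rw [add_comm m k]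
  exact lt_of_lt_of_le (mul_pos (pow_one_pos hnn h1 k) hm) this

end RWalk

namespace RWalk

variable {r : ℕ}

local notation "G" => FreeGroup (Fin r)

/-- Main induction: decomposition at the first crossing of `h'`. -/
lemma main_induction (μ : MonoidAlgebra ℝ G) (hnn : ∀ g : G, 0 ≤ μ.coeff g)
    (h' : G) (L : ℕ) (hL : ∀ s ∈ μ.coeff.support, FreeGroup.norm s ≤ L)
    (N : Finset G) (hball : ∀ g : G, FreeGroup.norm g ≤ L → g ∈ N) :
    ∀ (n : ℕ) (x h : G), h'.toWord <+: h.toWord → ¬ h'.toWord <+: x.toWord →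
      (μ ^ n).coeff (x⁻¹ * h) ≤ ∑ k ∈ Finset.range (n + 1), ∑ g ∈ N,
        (μ ^ k).coeff (x⁻¹ * (h' * g)) * (μ ^ (n - k)).coeff ((h' * g)⁻¹ * h) := by
  intro n
  induction n with
  | zero =>
    intro x h hh hx
    have hxh : x⁻¹ * h ≠ 1 := by
      intro hcon
      exact hx ((inv_mul_eq_one.1 hcon) ▸ hh)
    rw [pow_zero, MonoidAlgebra.one_def, MonoidAlgebra.coeff_single, Finsupp.single_apply,
      if_neg (fun hcon : (1 : G) = x⁻¹ * h => hxh hcon.symm)]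
    exact Finset.sum_nonneg fun k _ => Finset.sum_nonneg fun g _ =>
      mul_nonneg (pow_nonneg' hnn _ _) (pow_nonneg' hnn _ _)
  | succ n ih =>
    intro x h hh hx
    have hstep : ∀ s ∈ μ.coeff.support, (μ ^ n).coeff (s⁻¹ * (x⁻¹ * h)) ≤
        ∑ k ∈ Finset.range (n + 1), ∑ g ∈ N,
          (μ ^ k).coeff (s⁻¹ * (x⁻¹ * (h' * g))) * (μ ^ (n - k)).coeff ((h' * g)⁻¹ * h) := by
      intro s hs
      have hrw : ∀ z : G, s⁻¹ * (x⁻¹ * z) = (x * s)⁻¹ * z := by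
        intro z; rw [mul_inv_rev, mul_assoc]
      by_cases hcase : h'.toWord <+: (x * s).toWord
      · -- the walk crosses h' at this step
        set g₀ : G := h'⁻¹ * (x * s) with hg₀
        have hnormg₀ : FreeGroup.norm g₀ ≤ L := by
          have h1 := crossing h' x (x * s) hcase hx
          have h2 : x⁻¹ * (x * s) = s := by group
          rw [h2] at h1
          exact le_trans h1 (hL s hs)
        have hg₀N : g₀ ∈ N := hball g₀ hnormg₀
        have hxs : h' * g₀ = x * s := by rw [hg₀]; group
        have hterm : (μ ^ 0).coeff ((x * s)⁻¹ * (h' * g₀)) * (μ ^ (n - 0)).coeff ((h' * g₀)⁻¹ * h)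
            = (μ ^ n).coeff ((x * s)⁻¹ * h) := by
          rw [hxs, inv_mul_cancel, pow_zero, MonoidAlgebra.one_def, Nat.sub_zero]
          simp
        have hinner : (μ ^ 0).coeff ((x * s)⁻¹ * (h' * g₀)) * (μ ^ (n - 0)).coeff ((h' * g₀)⁻¹ * h)
            ≤ ∑ g ∈ N, (μ ^ 0).coeff ((x * s)⁻¹ * (h' * g)) * (μ ^ (n - 0)).coeff ((h' * g)⁻¹ * h) :=
          Finset.single_le_sum
            (f := fun g => (μ ^ 0).coeff ((x * s)⁻¹ * (h' * g)) * (μ ^ (n - 0)).coeff ((h' * g)⁻¹ * h))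
            (fun g _ => mul_nonneg (pow_nonneg' hnn _ _) (pow_nonneg' hnn _ _)) hg₀N
        have houter : ∑ g ∈ N, (μ ^ 0).coeff ((x * s)⁻¹ * (h' * g)) * (μ ^ (n - 0)).coeff ((h' * g)⁻¹ * h)
            ≤ ∑ k ∈ Finset.range (n + 1), ∑ g ∈ N,
              (μ ^ k).coeff ((x * s)⁻¹ * (h' * g)) * (μ ^ (n - k)).coeff ((h' * g)⁻¹ * h) :=
          Finset.single_le_sum
            (f := fun k => ∑ g ∈ N, (μ ^ k).coeff ((x * s)⁻¹ * (h' * g)) * (μ ^ (n - k)).coeff ((h' * g)⁻¹ * h))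
            (fun k _ => Finset.sum_nonneg fun g _ =>
              mul_nonneg (pow_nonneg' hnn _ _) (pow_nonneg' hnn _ _))
            (Finset.mem_range.2 (Nat.succ_pos n))
        calc (μ ^ n).coeff (s⁻¹ * (x⁻¹ * h)) = (μ ^ n).coeff ((x * s)⁻¹ * h) := by rw [hrw]
          _ = (μ ^ 0).coeff ((x * s)⁻¹ * (h' * g₀)) * (μ ^ (n - 0)).coeff ((h' * g₀)⁻¹ * h) := hterm.symm
          _ ≤ _ := le_trans hinner houter
          _ = ∑ k ∈ Finset.range (n + 1), ∑ g ∈ N,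
              (μ ^ k).coeff (s⁻¹ * (x⁻¹ * (h' * g))) * (μ ^ (n - k)).coeff ((h' * g)⁻¹ * h) := by
            simp only [hrw]
      · -- no crossing yet: apply the induction hypothesis at x * s
        have := ih (x * s) h hh hcase
        simp only [← hrw] at this
        exact this
    calc (μ ^ (n + 1)).coeff (x⁻¹ * h)
        = ∑ s ∈ μ.coeff.support, μ.coeff s * (μ ^ n).coeff (s⁻¹ * (x⁻¹ * h)) := by
          rw [pow_succ', mul_apply_left]
      _ ≤ ∑ s ∈ μ.coeff.support, μ.coeff s * (∑ k ∈ Finset.range (n + 1), ∑ g ∈ N,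
            (μ ^ k).coeff (s⁻¹ * (x⁻¹ * (h' * g))) * (μ ^ (n - k)).coeff ((h' * g)⁻¹ * h)) :=
          Finset.sum_le_sum fun s hs =>
            mul_le_mul_of_nonneg_left (hstep s hs) (hnn s)
      _ = ∑ k ∈ Finset.range (n + 1), ∑ g ∈ N,
            (∑ s ∈ μ.coeff.support, μ.coeff s * (μ ^ k).coeff (s⁻¹ * (x⁻¹ * (h' * g))))
              * (μ ^ (n - k)).coeff ((h' * g)⁻¹ * h) := by
          simp only [Finset.mul_sum]
          rw [Finset.sum_comm]
          refine Finset.sum_congr rfl fun k _ => ?_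
          rw [Finset.sum_comm]
          refine Finset.sum_congr rfl fun g _ => ?_
          rw [Finset.sum_mul]
          exact Finset.sum_congr rfl fun s _ => (mul_assoc _ _ _).symm
      _ = ∑ k ∈ Finset.range (n + 1), ∑ g ∈ N,
            (μ ^ (k + 1)).coeff (x⁻¹ * (h' * g)) * (μ ^ (n - k)).coeff ((h' * g)⁻¹ * h) := by
          refine Finset.sum_congr rfl fun k _ => Finset.sum_congr rfl fun g _ => ?_
          rw [pow_succ', mul_apply_left]
      _ ≤ ∑ k ∈ Finset.range (n + 1 + 1), ∑ g ∈ N,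
            (μ ^ k).coeff (x⁻¹ * (h' * g)) * (μ ^ (n + 1 - k)).coeff ((h' * g)⁻¹ * h) := by
          rw [Finset.sum_range_succ'
            (fun k => ∑ g ∈ N, (μ ^ k).coeff (x⁻¹ * (h' * g)) * (μ ^ (n + 1 - k)).coeff ((h' * g)⁻¹ * h))]
          have hre : ∀ k, n + 1 - (k + 1) = n - k := fun k => Nat.succ_sub_succ n k
          refine le_add_of_le_of_nonneg ?_ ?_
          · refine le_of_eq (Finset.sum_congr rfl fun k _ => Finset.sum_congr rfl fun g _ => ?_)
            rw [hre]
          · exact Finset.sum_nonneg fun g _ =>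
              mul_nonneg (pow_nonneg' hnn _ _) (pow_nonneg' hnn _ _)

end RWalk

/-- If `μ` is reasonable, there are `C > 0` and `a ∈ ℕ` such that for every `n`, every
`h` and every `h'` on the geodesic segment from the identity to `h`,
`(μ^n) h ≤ C ∑_{k=0}^{n+a} (μ^k) h' * (μ^{n+a-k}) (h'⁻¹ h)`. -/
theorem stmt9 (r : ℕ) (hr : 1 ≤ r) (μ : MonoidAlgebra ℝ (FreeGroup (Fin r)))
    (hμ : Reasonable μ) :
    ∃ C : ℝ, 0 < C ∧ ∃ a : ℕ,
      ∀ (n : ℕ) (h h' : FreeGroup (Fin r)),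
        FreeGroup.norm h = FreeGroup.norm h' + FreeGroup.norm (h'⁻¹ * h) →
        (μ ^ n).coeff h ≤
          C * ∑ k ∈ Finset.range (n + a + 1),
            (μ ^ k).coeff h' * (μ ^ (n + a - k)).coeff (h'⁻¹ * h) := by
  classical
  obtain ⟨hnn, hsum, hsym, hone, hgen⟩ := hμ
  -- the maximal length of a step
  set L : ℕ := μ.coeff.support.sup FreeGroup.norm with hLdef
  have hL : ∀ s ∈ μ.coeff.support, FreeGroup.norm s ≤ L := fun s hs => Finset.le_sup hs
  -- the ball of radius L is finite
  have ballfin : {g : FreeGroup (Fin r) | FreeGroup.norm g ≤ L}.Finite := by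
    have : {g : FreeGroup (Fin r) | FreeGroup.norm g ≤ L}
        = FreeGroup.toWord ⁻¹' {l : List (Fin r × Bool) | l.length ≤ L} := rfl
    rw [this]
    exact Set.Finite.preimage (Set.injOn_of_injective FreeGroup.toWord_injective)
      (List.finite_length_le (Fin r × Bool) L)
  set N : Finset (FreeGroup (Fin r)) := ballfin.toFinset with hNdef
  have hball : ∀ g : FreeGroup (Fin r), FreeGroup.norm g ≤ L → g ∈ N := fun g hg =>
    ballfin.mem_toFinset.2 hg
  have hNnorm : ∀ g ∈ N, FreeGroup.norm g ≤ L := fun g hg => ballfin.mem_toFinset.1 hg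
  have hN1 : (1 : FreeGroup (Fin r)) ∈ N := hball 1 (by simp)
  -- uniform time a₀ after which all points of the ball are charged
  set mfun : FreeGroup (Fin r) → ℕ := fun w => Classical.choose (RWalk.exists_pow_pos hnn hone hsym hgen w)
    with hmfun
  set a₀ : ℕ := N.sup mfun with ha₀def
  have ha₀ : ∀ w ∈ N, ∀ k : ℕ, 0 < (μ ^ (a₀ + k)).coeff w := by
    intro w hw k
    have hm := Classical.choose_spec (RWalk.exists_pow_pos hnn hone hsym hgen w)
    have hle : mfun w ≤ a₀ := Finset.le_sup hw
    have := hm (a₀ - mfun w + k)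
    rwa [show mfun w + (a₀ - mfun w + k) = a₀ + k by omega] at this
  have hNne : N.Nonempty := ⟨1, hN1⟩
  set ε : ℝ := N.inf' hNne (fun w => (μ ^ a₀).coeff w) with hεdef
  have hεpos : 0 < ε := by
    rw [hεdef, Finset.lt_inf'_iff]
    intro w hw
    have := ha₀ w hw 0
    rwa [add_zero] at this
  have hεle : ∀ w ∈ N, ε ≤ (μ ^ a₀).coeff w := fun w hw => Finset.inf'_le _ hw
  set a : ℕ := 2 * a₀ with hadef
  set A : ℝ := (N.card : ℝ) * (ε⁻¹ * ε⁻¹) with hAdef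
  have hApos : 0 < A := by
    apply mul_pos
    · exact_mod_cast Finset.card_pos.2 hNne
    · positivity
  set δ : ℝ := (μ ^ a).coeff (1 : FreeGroup (Fin r)) with hδdef
  have hδpos : 0 < δ := RWalk.pow_one_pos hnn hone a
  refine ⟨max A δ⁻¹, lt_max_of_lt_left hApos, a, ?_⟩
  intro n h h' hgeo
  have hSnn : 0 ≤ ∑ k ∈ Finset.range (n + a + 1),
      (μ ^ k).coeff h' * (μ ^ (n + a - k)).coeff (h'⁻¹ * h) :=
    Finset.sum_nonneg fun k _ =>
      mul_nonneg (RWalk.pow_nonneg' hnn _ _) (RWalk.pow_nonneg' hnn _ _)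
  by_cases hh' : h' = 1
  · -- trivial case h' = 1
    subst hh'
    have hterm : δ * (μ ^ n).coeff h ≤ ∑ k ∈ Finset.range (n + a + 1),
        (μ ^ k).coeff (1 : FreeGroup (Fin r)) * (μ ^ (n + a - k)).coeff ((1 : FreeGroup (Fin r))⁻¹ * h) := by
      have hmem : a ∈ Finset.range (n + a + 1) := Finset.mem_range.2 (by omega)
      have := Finset.single_le_sum
        (f := fun k => (μ ^ k).coeff (1 : FreeGroup (Fin r)) * (μ ^ (n + a - k)).coeff ((1 : FreeGroup (Fin r))⁻¹ * h))
        (fun k _ => mul_nonneg (RWalk.pow_nonneg' hnn _ _) (RWalk.pow_nonneg' hnn _ _)) hmem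
      simpa [show n + a - a = n by omega] using this
    calc (μ ^ n).coeff h = δ⁻¹ * (δ * (μ ^ n).coeff h) := by field_simp
      _ ≤ δ⁻¹ * ∑ k ∈ Finset.range (n + a + 1),
            (μ ^ k).coeff (1 : FreeGroup (Fin r)) * (μ ^ (n + a - k)).coeff ((1 : FreeGroup (Fin r))⁻¹ * h) :=
          mul_le_mul_of_nonneg_left hterm (by positivity)
      _ ≤ _ := mul_le_mul_of_nonneg_right (le_max_right _ _) hSnn
  · -- main case h' ≠ 1
    have hpre : h'.toWord <+: h.toWord := (RWalk.prefix_iff h' h).1 hgeo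
    have hnotpre : ¬ h'.toWord <+: (1 : FreeGroup (Fin r)).toWord := by
      intro hcon
      rw [FreeGroup.toWord_one] at hcon
      exact hh' (FreeGroup.toWord_eq_nil_iff.1 (List.prefix_nil.1 hcon))
    have hmain := RWalk.main_induction μ hnn h' L hL N hball n 1 h hpre hnotpre
    simp only [inv_one, one_mul] at hmain
    -- bound each term by the Harnack-type inequalities
    have hterm : ∀ k ∈ Finset.range (n + 1), ∀ g ∈ N,
        (μ ^ k).coeff (h' * g) * (μ ^ (n - k)).coeff ((h' * g)⁻¹ * h)
          ≤ (ε⁻¹ * (μ ^ (k + a₀)).coeff h') * (ε⁻¹ * (μ ^ (a₀ + (n - k))).coeff (h'⁻¹ * h)) := by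
      intro k _ g hg
      have hgN' : g⁻¹ ∈ N := hball g⁻¹ (by rw [FreeGroup.norm_inv_eq]; exact hNnorm g hg)
      have T1 : (μ ^ k).coeff (h' * g) * ε ≤ (μ ^ (k + a₀)).coeff h' := by
        have h1 := RWalk.le_pow_add hnn k a₀ (h' * g) h'
        have h2 : (h' * g)⁻¹ * h' = g⁻¹ := by group
        rw [h2] at h1
        calc (μ ^ k).coeff (h' * g) * ε ≤ (μ ^ k).coeff (h' * g) * (μ ^ a₀).coeff g⁻¹ :=
              mul_le_mul_of_nonneg_left (hεle g⁻¹ hgN') (RWalk.pow_nonneg' hnn _ _)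
          _ ≤ _ := h1
      have T2 : (μ ^ (n - k)).coeff ((h' * g)⁻¹ * h) * ε ≤ (μ ^ (a₀ + (n - k))).coeff (h'⁻¹ * h) := by
        have h1 := RWalk.le_pow_add hnn a₀ (n - k) g (h'⁻¹ * h)
        have h2 : g⁻¹ * (h'⁻¹ * h) = (h' * g)⁻¹ * h := by group
        rw [h2] at h1
        calc (μ ^ (n - k)).coeff ((h' * g)⁻¹ * h) * ε
            ≤ (μ ^ a₀).coeff g * (μ ^ (n - k)).coeff ((h' * g)⁻¹ * h) := by
              rw [mul_comm]
              exact mul_le_mul_of_nonneg_right (hεle g hg) (RWalk.pow_nonneg' hnn _ _)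
          _ ≤ _ := h1
      have e1 : (μ ^ k).coeff (h' * g) ≤ ε⁻¹ * (μ ^ (k + a₀)).coeff h' := by
        rw [← mul_le_mul_iff_of_pos_right hεpos, mul_comm (ε⁻¹ * _) ε, ← mul_assoc,
          mul_inv_cancel₀ (ne_of_gt hεpos), one_mul]
        exact T1
      have e2 : (μ ^ (n - k)).coeff ((h' * g)⁻¹ * h) ≤ ε⁻¹ * (μ ^ (a₀ + (n - k))).coeff (h'⁻¹ * h) := by
        rw [← mul_le_mul_iff_of_pos_right hεpos, mul_comm (ε⁻¹ * _) ε, ← mul_assoc,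
          mul_inv_cancel₀ (ne_of_gt hεpos), one_mul]
        exact T2
      exact mul_le_mul e1 e2 (RWalk.pow_nonneg' hnn _ _)
        (mul_nonneg (by positivity) (RWalk.pow_nonneg' hnn _ _))
    -- sum the bounds
    have hsum2 : ∑ k ∈ Finset.range (n + 1), ∑ g ∈ N,
        (μ ^ k).coeff (h' * g) * (μ ^ (n - k)).coeff ((h' * g)⁻¹ * h)
        ≤ A * ∑ k ∈ Finset.range (n + 1),
            (μ ^ (k + a₀)).coeff h' * (μ ^ (n + a - (k + a₀))).coeff (h'⁻¹ * h) := by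
      rw [Finset.mul_sum]
      refine Finset.sum_le_sum fun k hk => ?_
      have hkn : k ≤ n := by
        have := Finset.mem_range.1 hk
        omega
      have hrw : n + a - (k + a₀) = a₀ + (n - k) := by
        rw [hadef]
        omega
      rw [hrw]
      calc ∑ g ∈ N, (μ ^ k).coeff (h' * g) * (μ ^ (n - k)).coeff ((h' * g)⁻¹ * h)
          ≤ N.card • ((ε⁻¹ * (μ ^ (k + a₀)).coeff h') * (ε⁻¹ * (μ ^ (a₀ + (n - k))).coeff (h'⁻¹ * h))) :=
            Finset.sum_le_card_nsmul N _ _ (fun g hg => hterm k hk g hg)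
        _ = (N.card : ℝ) * ((ε⁻¹ * (μ ^ (k + a₀)).coeff h') * (ε⁻¹ * (μ ^ (a₀ + (n - k))).coeff (h'⁻¹ * h)))
            := by rw [nsmul_eq_mul]
        _ = A * ((μ ^ (k + a₀)).coeff h' * (μ ^ (a₀ + (n - k))).coeff (h'⁻¹ * h)) := by
            rw [hAdef]; ring
    -- reindex the sum
    have hreidx : ∑ k ∈ Finset.range (n + 1),
        (μ ^ (k + a₀)).coeff h' * (μ ^ (n + a - (k + a₀))).coeff (h'⁻¹ * h)
        ≤ ∑ j ∈ Finset.range (n + a + 1), (μ ^ j).coeff h' * (μ ^ (n + a - j)).coeff (h'⁻¹ * h) := by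
      have himg : ∑ k ∈ Finset.range (n + 1),
          (μ ^ (k + a₀)).coeff h' * (μ ^ (n + a - (k + a₀))).coeff (h'⁻¹ * h)
          = ∑ j ∈ (Finset.range (n + 1)).image (· + a₀),
              (μ ^ j).coeff h' * (μ ^ (n + a - j)).coeff (h'⁻¹ * h) := by
        rw [Finset.sum_image (by intro x _ y _ hxy; beta_reduce at hxy; omega)]
      rw [himg]
      refine Finset.sum_le_sum_of_subset_of_nonneg ?_ ?_
      · intro j hj
        obtain ⟨k, hk, rfl⟩ := Finset.mem_image.1 hj
        have := Finset.mem_range.1 hk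
        rw [Finset.mem_range, hadef]
        omega
      · intro j _ _
        exact mul_nonneg (RWalk.pow_nonneg' hnn _ _) (RWalk.pow_nonneg' hnn _ _)
    calc (μ ^ n).coeff h ≤ ∑ k ∈ Finset.range (n + 1), ∑ g ∈ N,
          (μ ^ k).coeff (h' * g) * (μ ^ (n - k)).coeff ((h' * g)⁻¹ * h) := hmain
      _ ≤ A * ∑ k ∈ Finset.range (n + 1),
            (μ ^ (k + a₀)).coeff h' * (μ ^ (n + a - (k + a₀))).coeff (h'⁻¹ * h) := hsum2
      _ ≤ A * ∑ j ∈ Finset.range (n + a + 1), (μ ^ j).coeff h' * (μ ^ (n + a - j)).coeff (h'⁻¹ * h) :=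
          mul_le_mul_of_nonneg_left hreidx (le_of_lt hApos)
      _ ≤ _ := mul_le_mul_of_nonneg_right (le_max_left _ _) hSnn
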